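/- For any connected graph G of order n ≥ 4, the total domination number of its central graph satisfies 3 ≤ γ_t(C(G)) ≤ n + ⌈n/2⌉ − 1. -/

import Mathlib

open SimpleGraph

/-- The central graph `C(G)`: subdivide each edge of `G` once (vertex `c_e` for each
edge `e`) and join all non-adjacent pairs of original vertices. -/
def centralGraph {V : Type*} (G : SimpleGraph V) : SimpleGraph (V ⊕ G.edgeSet) where
  Adj x y :=
    match x, y with
    | Sum.inl u, Sum.inl v => u ≠ v ∧ ¬ G.Adj u v
    | Sum.inl u, Sum.inr e => u ∈ (e : Sym2 V)
    | Sum.inr e, Sum.inl u => u ∈ (e : Sym2 V)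
    | Sum.inr _, Sum.inr _ => False
  symm := by
    constructor
    rintro (u | e) (v | f) h
    · exact ⟨h.1.symm, fun a => h.2 a.symm⟩
    · exact h
    · exact h
    · exact h
  loopless := by
    constructor
    rintro (u | e) h
    · exact h.1 rfl
    · exact h

/-- `f` is a total dominator coloring of `G`: a proper coloring such that every
vertex is adjacent to all vertices of some (nonempty) color class. -/
def IsTDColoring {V : Type*} (G : SimpleGraph V) (f : V → ℕ) : Prop :=
  (∀ u v, G.Adj u v → f u ≠ f v) ∧
  ∀ v, ∃ c, (∃ w, f w = c) ∧ ∀ w, f w = c → G.Adj v w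

/-- Total dominator chromatic number: minimum number of colors in a TDC. -/
noncomputable def tdcn {V : Type*} (G : SimpleGraph V) : ℕ :=
  sInf {k | ∃ f : V → ℕ, IsTDColoring G f ∧ ∀ v, f v < k}

/-- Total domination number. -/
noncomputable def tdn {V : Type*} (G : SimpleGraph V) : ℕ :=
  sInf {k | ∃ S : Set V, S.ncard = k ∧ ∀ v, ∃ u ∈ S, G.Adj v u}

/-- The join of two graphs. -/
def joinGraph {α β : Type*} (G : SimpleGraph α) (H : SimpleGraph β) :
    SimpleGraph (α ⊕ β) where
  Adj x y :=
    match x, y with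
    | Sum.inl u, Sum.inl v => G.Adj u v
    | Sum.inr u, Sum.inr v => H.Adj u v
    | Sum.inl _, Sum.inr _ => True
    | Sum.inr _, Sum.inl _ => True
  symm := by constructor; rintro (u | u) (v | v) h <;> first | exact h.symm | trivial
  loopless := by constructor; rintro (u | u) h <;> exact h.ne rfl

/-- The path graph on `n` vertices. -/
def pathG (n : ℕ) : SimpleGraph (Fin n) :=
  SimpleGraph.fromRel (fun i j => (i : ℕ) + 1 = (j : ℕ))

/-- The cycle graph on `n` vertices. -/
def cycleG (n : ℕ) : SimpleGraph (ZMod n) :=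
  SimpleGraph.fromRel (fun i j => i - j = 1)

/-- The double star `S_{1,n,n}`: center `0`, support vertices `1,...,n`
(adjacent to the center), each `i` with its own pendant `n+i`. -/
def doubleStar (n : ℕ) : SimpleGraph (Fin (2 * n + 1)) :=
  SimpleGraph.fromRel (fun a b =>
    ((a : ℕ) = 0 ∧ 1 ≤ (b : ℕ) ∧ (b : ℕ) ≤ n) ∨
    (1 ≤ (a : ℕ) ∧ (a : ℕ) ≤ n ∧ (b : ℕ) = (a : ℕ) + n))

/-- The disjoint union of a family of graphs. -/
def sigmaGraph {ι : Type*} {V : ι → Type*} (G : ∀ i, SimpleGraph (V i)) :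
    SimpleGraph (Σ i, V i) :=
  SimpleGraph.fromRel (fun x y =>
    ∃ (i : ι) (u v : V i), (G i).Adj u v ∧ x = ⟨i, u⟩ ∧ y = ⟨i, v⟩)
section Aux
variable {V : Type*} {G : SimpleGraph V}

lemma cg_adj_ll {u v : V} :
    (centralGraph G).Adj (Sum.inl u) (Sum.inl v) ↔ u ≠ v ∧ ¬ G.Adj u v := Iff.rfl

lemma cg_adj_lr {u : V} {e : G.edgeSet} :
    (centralGraph G).Adj (Sum.inl u) (Sum.inr e) ↔ u ∈ (e : Sym2 V) := Iff.rfl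

lemma cg_adj_rl {u : V} {e : G.edgeSet} :
    (centralGraph G).Adj (Sum.inr e) (Sum.inl u) ↔ u ∈ (e : Sym2 V) := Iff.rfl

lemma cg_adj_rr {e f : G.edgeSet} :
    (centralGraph G).Adj (Sum.inr e) (Sum.inr f) ↔ False := Iff.rfl

/-- any vertex distinct from another vertex it can reach has a neighbor -/
lemma exists_adj_of_reachable {v u : V} (h : G.Reachable v u) (hne : v ≠ u) :
    ∃ z, G.Adj v z := by
  obtain ⟨p⟩ := h
  cases p with
  | nil => exact absurd rfl hne
  | cons h _ => exact ⟨_, h⟩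

lemma exists_third [Fintype V] (h : 3 ≤ Fintype.card V) (a b : V) :
    ∃ c, c ≠ a ∧ c ≠ b := by
  classical
  by_contra h'
  push_neg at h'
  have hsub : (Finset.univ : Finset V) ⊆ {a, b} := by
    intro c _
    simp only [Finset.mem_insert, Finset.mem_singleton]
    by_cases hc : c = a
    · exact Or.inl hc
    · exact Or.inr (h' c hc)
  have := Finset.card_le_card hsub
  have h2 : ({a, b} : Finset V).card ≤ 2 := Finset.card_insert_le a {b} |>.trans (by simp)
  rw [Finset.card_univ] at this
  omega

lemma walkLem (u v : V)
    (hE : ∀ a b, G.Adj a b → a = u ∨ b = u ∨ a = v ∨ b = v) (huv : u ≠ v) :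
    ∀ {x : V} (p : G.Walk x v), (G.Adj u x ∨ x = u) →
      G.Adj u v ∨ ∃ w, G.Adj u w ∧ G.Adj v w := by
  intro x p
  induction p with
  | nil =>
    rintro (h | rfl)
    · exact Or.inl h
    · exact absurd rfl huv
  | @cons a b c h q ih =>
    intro hx
    rcases hE a b h with rfl | rfl | rfl | rfl
    · exact ih hE huv (Or.inl h)
    · exact ih hE huv (Or.inr rfl)
    · rcases hx with hx | rfl
      · exact Or.inl hx
      · exact absurd rfl huv
    · rcases hx with hx | rfl
      · exact Or.inr ⟨a, hx, h.symm⟩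
      · exact Or.inl h

end Aux

section Aux2
variable {V : Type*} {G : SimpleGraph V}

lemma no2_mixed [Fintype V] (hcard : 3 ≤ Fintype.card V) (hconn : G.Connected)
    (u : V) (e : G.edgeSet)
    (hdom : ∀ v, ∃ w ∈ ({Sum.inl u, Sum.inr e} : Set (V ⊕ G.edgeSet)),
      (centralGraph G).Adj v w) : False := by
  -- every edge contains u
  have hstar : ∀ f : G.edgeSet, u ∈ (f : Sym2 V) := by
    intro f
    obtain ⟨w, hw, hadj⟩ := hdom (Sum.inr f)
    rcases hw with rfl | rfl
    · exact cg_adj_rl.mp hadj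
    · exact absurd hadj (by exact fun h => h)
  -- every other vertex is adjacent to u
  have huniv : ∀ v, v ≠ u → G.Adj u v := by
    intro v hv
    obtain ⟨z, hz⟩ := exists_adj_of_reachable (hconn v u) hv
    have := hstar ⟨s(v, z), G.mem_edgeSet.mpr hz⟩
    rcases Sym2.mem_iff.mp this with rfl | rfl
    · exact absurd rfl hv
    · exact hz.symm
  obtain ⟨w, hw⟩ := Sym2.mem_iff_exists.mp (hstar e)
  obtain ⟨c, hcu, hcw⟩ := exists_third hcard u w
  obtain ⟨x, hx, hadj⟩ := hdom (Sum.inl c)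
  rcases hx with rfl | rfl
  · exact (cg_adj_ll.mp hadj).2 ((huniv c hcu).symm)
  · have : c ∈ (e : Sym2 V) := cg_adj_lr.mp hadj
    rw [hw] at this
    rcases Sym2.mem_iff.mp this with rfl | rfl
    · exact hcu rfl
    · exact hcw rfl

lemma no2_ll (hconn : G.Connected) (u v : V) (hne : u ≠ v) (hnadj : ¬ G.Adj u v)
    (hdom : ∀ x, ∃ w ∈ ({Sum.inl u, Sum.inl v} : Set (V ⊕ G.edgeSet)),
      (centralGraph G).Adj x w) : False := by
  have hE : ∀ a b, G.Adj a b → a = u ∨ b = u ∨ a = v ∨ b = v := by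
    intro a b hab
    obtain ⟨w, hw, hadj⟩ := hdom (Sum.inr ⟨s(a, b), G.mem_edgeSet.mpr hab⟩)
    rcases hw with rfl | rfl
    · rcases Sym2.mem_iff.mp (cg_adj_rl.mp hadj) with rfl | rfl
      · exact Or.inl rfl
      · exact Or.inr (Or.inl rfl)
    · rcases Sym2.mem_iff.mp (cg_adj_rl.mp hadj) with rfl | rfl
      · exact Or.inr (Or.inr (Or.inl rfl))
      · exact Or.inr (Or.inr (Or.inr rfl))
  obtain ⟨p⟩ := hconn u v
  rcases walkLem u v hE hne p (Or.inr rfl) with h | ⟨w, hw1, hw2⟩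
  · exact hnadj h
  · obtain ⟨x, hx, hadj⟩ := hdom (Sum.inl w)
    rcases hx with rfl | rfl
    · exact (cg_adj_ll.mp hadj).2 hw1.symm
    · exact (cg_adj_ll.mp hadj).2 hw2.symm

lemma pairing_cover (k : ℕ) (hk : 2 ≤ k) (g : Fin k → V)
    (hinj : Function.Injective g)
    (hadj : ∀ i j : Fin k, i ≠ j → G.Adj (g i) (g j)) :
    ∃ T : Set G.edgeSet, T.ncard ≤ (k + 1) / 2 ∧
      ∀ i : Fin k, ∃ e ∈ T, g i ∈ (e : Sym2 V) := by
  have hlt1 : ∀ i : Fin ((k + 1) / 2), 2 * i.val < k := fun i => by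
    have := i.isLt; omega
  set pa : Fin ((k + 1) / 2) → Fin k := fun i => ⟨2 * i.val, hlt1 i⟩ with hpa
  set pb : Fin ((k + 1) / 2) → Fin k := fun i =>
    if h : 2 * i.val + 1 < k then ⟨2 * i.val + 1, h⟩ else ⟨0, by omega⟩ with hpb
  have hvb : ∀ i, (pb i).val = if 2 * i.val + 1 < k then 2 * i.val + 1 else 0 := by
    intro i
    simp only [hpb]
    split <;> rfl
  have hne : ∀ i, pa i ≠ pb i := by
    intro i h
    have h2 := congrArg Fin.val h
    rw [hvb] at h2
    simp only [hpa] at h2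
    have := hlt1 i
    split at h2 <;> omega
  set h : Fin ((k + 1) / 2) → G.edgeSet := fun i =>
    ⟨s(g (pa i), g (pb i)), G.mem_edgeSet.mpr (hadj _ _ (hne i))⟩ with hdefh
  refine ⟨Set.range h, ?_, ?_⟩
  · rw [← Set.image_univ]
    calc (h '' Set.univ).ncard ≤ (Set.univ : Set (Fin ((k + 1) / 2))).ncard :=
          Set.ncard_image_le Set.finite_univ
      _ = (k + 1) / 2 := by
          rw [Set.ncard_univ, Nat.card_eq_fintype_card, Fintype.card_fin]
  · intro j
    have hj2 : j.val / 2 < (k + 1) / 2 := by have := j.isLt; omega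
    set i : Fin ((k + 1) / 2) := ⟨j.val / 2, hj2⟩ with hi
    refine ⟨h i, Set.mem_range_self i, ?_⟩
    have : (h i : Sym2 V) = s(g (pa i), g (pb i)) := rfl
    rw [this, Sym2.mem_iff]
    by_cases hj : j.val % 2 = 0
    · left
      congr 1
      apply Fin.ext
      simp only [hpa, hi]
      omega
    · right
      congr 1
      apply Fin.ext
      rw [hvb]
      have := j.isLt
      simp only [hi]
      split <;> omega

end Aux2

section Aux3
variable {V : Type*} {G : SimpleGraph V}

lemma edge_endpoints (e : G.edgeSet) : ∃ a b : V, a ≠ b ∧ (e : Sym2 V) = s(a, b) := by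
  rcases e with ⟨e, he⟩
  show ∃ a b, a ≠ b ∧ e = s(a, b)
  revert he
  induction e using Sym2.ind with
  | _ a b => exact fun he => ⟨a, b, (G.mem_edgeSet.mp he).ne, rfl⟩

lemma exists_small_tds [Fintype V] (G : SimpleGraph V) (n : ℕ) (hn : Fintype.card V = n)
    (hn4 : 4 ≤ n) (hconn : G.Connected) :
    ∃ S : Set (V ⊕ G.edgeSet), S.ncard ≤ n + (n + 1) / 2 - 1 ∧
      ∀ v, ∃ u ∈ S, (centralGraph G).Adj v u := by
  classical
  by_cases hcomp : ∀ a b : V, a ≠ b → G.Adj a b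
  · -- complete graph case
    have hV : Nonempty V := Fintype.card_pos_iff.mp (by omega)
    obtain ⟨v0⟩ := hV
    have eqv : V ≃ Fin n := Fintype.equivFinOfCardEq hn
    obtain ⟨T, hT1, hT2⟩ := pairing_cover (G := G) n (by omega) eqv.symm
      eqv.symm.injective
      (fun i j hij => hcomp _ _ (fun h => hij (eqv.symm.injective h)))
    refine ⟨Sum.inl '' {v0}ᶜ ∪ Sum.inr '' T, ?_, ?_⟩
    · have h1 : (Sum.inl '' ({v0}ᶜ : Set V) : Set (V ⊕ G.edgeSet)).ncard ≤ n - 1 := by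
        have hlt : ({v0}ᶜ : Set V).ncard < (Set.univ : Set V).ncard :=
          Set.ncard_lt_ncard (by
            rw [Set.ssubset_univ_iff]
            intro h
            have : v0 ∈ ({v0}ᶜ : Set V) := h ▸ Set.mem_univ v0
            exact this rfl) Set.finite_univ
        rw [Set.ncard_univ, Nat.card_eq_fintype_card, hn] at hlt
        have := Set.ncard_image_le (f := (Sum.inl : V → V ⊕ G.edgeSet))
          (s := ({v0}ᶜ : Set V)) (Set.toFinite _)
        omega
      have h2 : (Sum.inr '' T : Set (V ⊕ G.edgeSet)).ncard ≤ (n + 1) / 2 :=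
        le_trans (Set.ncard_image_le (Set.toFinite _)) hT1
      have := Set.ncard_union_le (Sum.inl '' ({v0}ᶜ : Set V))
        (Sum.inr '' T : Set (V ⊕ G.edgeSet))
      omega
    · rintro (v | e)
      · obtain ⟨e, heT, hve⟩ := hT2 (eqv v)
        refine ⟨Sum.inr e, Or.inr ⟨e, heT, rfl⟩, cg_adj_lr.mpr (by simpa using hve)⟩
      · obtain ⟨a, b, hab, hrep⟩ := edge_endpoints e
        by_cases ha : a = v0
        · refine ⟨Sum.inl b, Or.inl ⟨b, fun h => hab (ha.trans h.symm), rfl⟩,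
            cg_adj_rl.mpr ?_⟩
          rw [hrep, Sym2.mem_iff]; exact Or.inr rfl
        · refine ⟨Sum.inl a, Or.inl ⟨a, ha, rfl⟩, cg_adj_rl.mpr ?_⟩
          rw [hrep, Sym2.mem_iff]; exact Or.inl rfl
  · -- non-complete case
    push_neg at hcomp
    obtain ⟨a, b, hab, hnadj⟩ := hcomp
    set U : Set V := {v : V | ∀ w, w ≠ v → G.Adj v w} with hU
    have hUa : a ∉ U := fun h => hnadj (h b (fun hh => hab hh.symm))
    have hUb : b ∉ U := fun h => hnadj (h a hab).symm
    have hUfin : U.Finite := Set.toFinite U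
    set s : Finset V := hUfin.toFinset with hs
    have hsU : ∀ {x}, x ∈ s ↔ x ∈ U := fun {x} => hUfin.mem_toFinset
    have hscard : s.card ≤ n - 2 := by
      have hsub : s ⊆ Finset.univ \ {a, b} := by
        intro x hx
        rw [Finset.mem_sdiff]
        refine ⟨Finset.mem_univ x, ?_⟩
        simp only [Finset.mem_insert, Finset.mem_singleton]
        rintro (rfl | rfl)
        · exact hUa (hsU.mp hx)
        · exact hUb (hsU.mp hx)
      have hcsd : (Finset.univ \ ({a, b} : Finset V)).card = n - 2 := by
        rw [Finset.card_sdiff_of_subset (Finset.subset_univ _), Finset.card_univ, hn]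
        rw [Finset.card_insert_of_notMem (by simpa using hab), Finset.card_singleton]
      exact hcsd ▸ Finset.card_le_card hsub
    -- a set of edges covering all universal vertices
    have hT : ∃ T : Set G.edgeSet, T.ncard ≤ (n - 1) / 2 ∧
        ∀ u ∈ U, ∃ e ∈ T, u ∈ (e : Sym2 V) := by
      rcases Nat.lt_or_ge s.card 2 with hk | hk
      · have hk01 : s.card = 0 ∨ s.card = 1 := by omega
        rcases hk01 with hk0 | hk1
        · refine ⟨∅, by simp, fun u hu => absurd (hsU.mpr hu) ?_⟩
          simp [Finset.card_eq_zero.mp hk0]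
        · obtain ⟨u, hu⟩ := Finset.card_eq_one.mp hk1
          have huU : u ∈ U := hsU.mp (hu ▸ Finset.mem_singleton_self u)
          have : Nontrivial V := Fintype.one_lt_card_iff_nontrivial.mp (by omega)
          obtain ⟨w, hw⟩ := exists_ne u
          refine ⟨{⟨s(u, w), G.mem_edgeSet.mpr (huU w hw)⟩}, by simp; omega, ?_⟩
          intro v hv
          have : v ∈ s := hsU.mpr hv
          rw [hu, Finset.mem_singleton] at this
          subst this
          exact ⟨_, rfl, by rw [Sym2.mem_iff]; exact Or.inl rfl⟩
      · set g : Fin s.card → V := fun i => (s.equivFin.symm i : V) with hg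
        have hginj : Function.Injective g :=
          Subtype.val_injective.comp s.equivFin.symm.injective
        have hgU : ∀ i, g i ∈ U := fun i => hsU.mp (s.equivFin.symm i).2
        obtain ⟨T, hT1, hT2⟩ := pairing_cover (G := G) s.card hk g hginj
          (fun i j hij => (hgU i) (g j) (fun h => hij (hginj h.symm)))
        refine ⟨T, by omega, ?_⟩
        intro u hu
        have hus : u ∈ s := hsU.mpr hu
        have := hT2 (s.equivFin ⟨u, hus⟩)
        simpa [hg] using this
    obtain ⟨T, hT1, hT2⟩ := hT
    refine ⟨Sum.inl '' Set.univ ∪ Sum.inr '' T, ?_, ?_⟩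
    · have h1 : (Sum.inl '' (Set.univ : Set V) : Set (V ⊕ G.edgeSet)).ncard ≤ n := by
        have := Set.ncard_image_le (f := (Sum.inl : V → V ⊕ G.edgeSet))
          (s := (Set.univ : Set V)) Set.finite_univ
        rw [Set.ncard_univ, Nat.card_eq_fintype_card, hn] at this
        exact this
      have h2 : (Sum.inr '' T : Set (V ⊕ G.edgeSet)).ncard ≤ (n - 1) / 2 :=
        le_trans (Set.ncard_image_le (Set.toFinite _)) hT1
      have := Set.ncard_union_le (Sum.inl '' (Set.univ : Set V))
        (Sum.inr '' T : Set (V ⊕ G.edgeSet))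
      omega
    · rintro (v | e)
      · by_cases hv : v ∈ U
        · obtain ⟨e, heT, hve⟩ := hT2 v hv
          exact ⟨Sum.inr e, Or.inr ⟨e, heT, rfl⟩, cg_adj_lr.mpr hve⟩
        · rw [hU, Set.mem_setOf_eq] at hv
          push_neg at hv
          obtain ⟨w, hw1, hw2⟩ := hv
          exact ⟨Sum.inl w, Or.inl ⟨w, Set.mem_univ w, rfl⟩,
            cg_adj_ll.mpr ⟨fun h => hw1 h.symm, hw2⟩⟩
      · obtain ⟨x, y, hxy, hrep⟩ := edge_endpoints e
        refine ⟨Sum.inl x, Or.inl ⟨x, Set.mem_univ x, rfl⟩, cg_adj_rl.mpr ?_⟩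
        rw [hrep, Sym2.mem_iff]; exact Or.inl rfl

end Aux3

theorem tdn_central_bounds {V : Type*} [Fintype V] (G : SimpleGraph V) (n : ℕ)
    (hn : Fintype.card V = n) (hn4 : 4 ≤ n) (hconn : G.Connected) :
    3 ≤ tdn (centralGraph G) ∧ tdn (centralGraph G) ≤ n + (n + 1) / 2 - 1 := by
  classical
  obtain ⟨S, hScard, hSdom⟩ := exists_small_tds G n hn hn4 hconn
  have hV : Nonempty V := Fintype.card_pos_iff.mp (by omega)
  obtain ⟨v0⟩ := hV
  have hcard3 : 3 ≤ Fintype.card V := by omega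
  simp only [tdn]
  constructor
  · refine le_csInf ⟨S.ncard, S, rfl, hSdom⟩ ?_
    rintro k ⟨S', hS'card, hdom⟩
    by_contra hlt
    push_neg at hlt
    have hk : k = 0 ∨ k = 1 ∨ k = 2 := by omega
    rcases hk with rfl | rfl | rfl
    · rw [Set.ncard_eq_zero (Set.toFinite S')] at hS'card
      obtain ⟨u, hu, -⟩ := hdom (Sum.inl v0)
      rw [hS'card] at hu
      exact hu
    · obtain ⟨x, rfl⟩ := Set.ncard_eq_one.mp hS'card
      obtain ⟨u, hu, hadj⟩ := hdom x
      rw [Set.mem_singleton_iff] at hu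
      subst hu
      exact (centralGraph G).loopless.irrefl u hadj
    · obtain ⟨x, y, hxy, rfl⟩ := Set.ncard_eq_two.mp hS'card
      have hAdjxy : (centralGraph G).Adj x y := by
        obtain ⟨u, hu, hadj⟩ := hdom x
        rcases hu with rfl | rfl
        · exact absurd hadj ((centralGraph G).loopless.irrefl u)
        · exact hadj
      match x, y with
      | Sum.inl u, Sum.inl v =>
        obtain ⟨h1, h2⟩ := cg_adj_ll.mp hAdjxy
        exact no2_ll hconn u v h1 h2 hdom
      | Sum.inl u, Sum.inr e =>
        exact no2_mixed hcard3 hconn u e hdom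
      | Sum.inr e, Sum.inl u =>
        rw [Set.pair_comm] at hdom
        exact no2_mixed hcard3 hconn u e hdom
      | Sum.inr e, Sum.inr f =>
        exact hAdjxy
  · exact le_trans (Nat.sInf_le ⟨S, rfl, hSdom⟩) hScard
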